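/- Euclidean norm of the embedding: for every x ∈ [0,1)^d, ||Ψ(x)||_2^2 = ∑_{k=0}^{d-1} 2^{-k} C(m,k) C(d-1,k). In particular, ||Ψ(x)||_2 is the same for all x. -/

import Mathlib

open MeasureTheory Finset

/-- The dyadic box in `[0,1]^d` whose `i`-th factor is the dyadic interval
`[jj i / 2^{ℓ i}, (jj i + 1) / 2^{ℓ i})`. -/
def dyadicBox (d : ℕ) (ℓ jj : Fin d → ℕ) : Set (Fin d → ℝ) :=
  {x | ∀ i, (jj i : ℝ) / 2 ^ ℓ i ≤ x i ∧ x i < ((jj i : ℝ) + 1) / 2 ^ ℓ i}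

/-- The indicator function of the dyadic box with levels `ℓ` and positions `jj`. -/
noncomputable def chi (d : ℕ) (ℓ jj : Fin d → ℕ) (x : Fin d → ℝ) : ℝ :=
  Set.indicator (dyadicBox d ℓ jj) 1 x

/-- The embedding coordinate `Ψ_{k,r,R}` where `R` is the dyadic box with levels `ℓ` and
positions `jj`: for `k = 0` it is `χ_R`; for `k ≥ 1` it is
`2^{-k/2} ∏_{t=1}^{k} (χ_{R_{r_t}^+} - χ_{R_{r_t}^-})`, the halves being taken in
coordinate `r t`. -/
noncomputable def Psi (d k : ℕ) (r : Fin (k + 1) → Fin d) (ℓ jj : Fin d → ℕ)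
    (x : Fin d → ℝ) : ℝ :=
  if k = 0 then chi d ℓ jj x
  else (Real.sqrt 2)⁻¹ ^ k *
    ∏ t ∈ Finset.Ioi (0 : Fin (k + 1)),
      (chi d (Function.update ℓ (r t) (ℓ (r t) + 1))
          (Function.update jj (r t) (2 * jj (r t) + 1)) x
        - chi d (Function.update ℓ (r t) (ℓ (r t) + 1))
          (Function.update jj (r t) (2 * jj (r t))) x)

/-- The index set `𝒯` of admissible triples `(k, r, R)` at scale `m`. -/
def Triples (d m : ℕ) : Set ((k : ℕ) × (Fin (k + 1) → Fin d) × (Fin d → ℕ) × (Fin d → ℕ)) :=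
  {t | t.1 < d ∧ t.1 ≤ m ∧ StrictMono t.2.1 ∧ (t.2.1 0 : ℕ) = 0 ∧
    (∑ i, t.2.2.1 i) = m - t.1 ∧ (∀ i, t.2.2.2 i < 2 ^ t.2.2.1 i) ∧
    (∀ i, i ∉ Set.range t.2.1 → t.2.2.1 i = 0)}

lemma mem_dyadicBox_iff {d : ℕ} {ℓ jj : Fin d → ℕ} {x : Fin d → ℝ} :
    x ∈ dyadicBox d ℓ jj ↔ ∀ i, (jj i : ℝ) / 2 ^ ℓ i ≤ x i ∧ x i < ((jj i : ℝ) + 1) / 2 ^ ℓ i :=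
  Iff.rfl

open Classical in
lemma chi_eq_ite {d : ℕ} (ℓ jj : Fin d → ℕ) (x : Fin d → ℝ) :
    chi d ℓ jj x = if x ∈ dyadicBox d ℓ jj then 1 else 0 := by
  classical simp [chi, Set.indicator_apply]

lemma half_sq (d : ℕ) (ℓ jj : Fin d → ℕ) (x : Fin d → ℝ) (c : Fin d) :
    (chi d (Function.update ℓ c (ℓ c + 1)) (Function.update jj c (2 * jj c + 1)) x
      - chi d (Function.update ℓ c (ℓ c + 1)) (Function.update jj c (2 * jj c)) x) ^ 2
      = chi d ℓ jj x := by
  classical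
  have hp : (0:ℝ) < 2 ^ ℓ c := by positivity
  have hq : (0:ℝ) < 2 ^ (ℓ c + 1) := by positivity
  have hpow : (2:ℝ) ^ (ℓ c + 1) = 2 ^ ℓ c * 2 := by rw [pow_succ]
  set U := dyadicBox d (Function.update ℓ c (ℓ c + 1)) (Function.update jj c (2 * jj c + 1))
    with hUdef
  set L := dyadicBox d (Function.update ℓ c (ℓ c + 1)) (Function.update jj c (2 * jj c))
    with hLdef
  have hUmem : x ∈ U ↔ ((2 * (jj c : ℝ) + 1) / (2 ^ ℓ c * 2) ≤ x c ∧
      x c < (2 * (jj c : ℝ) + 1 + 1) / (2 ^ ℓ c * 2)) ∧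
      ∀ i, i ≠ c → ((jj i : ℝ) / 2 ^ ℓ i ≤ x i ∧ x i < ((jj i : ℝ) + 1) / 2 ^ ℓ i) := by
    rw [hUdef, mem_dyadicBox_iff]
    constructor
    · intro h
      refine ⟨?_, fun i hic => by simpa [Function.update_of_ne hic] using h i⟩
      have h1 := h c
      simp only [Function.update_self] at h1
      push_cast at h1
      rw [hpow] at h1
      exact ⟨h1.1, h1.2⟩
    · rintro ⟨h1, h2⟩ i
      rcases eq_or_ne i c with rfl | hic
      · simp only [Function.update_self]
        push_cast
        rw [hpow]
        exact ⟨h1.1, h1.2⟩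
      · simpa [Function.update_of_ne hic] using h2 i hic
  have hLmem : x ∈ L ↔ ((2 * (jj c : ℝ)) / (2 ^ ℓ c * 2) ≤ x c ∧
      x c < (2 * (jj c : ℝ) + 1) / (2 ^ ℓ c * 2)) ∧
      ∀ i, i ≠ c → ((jj i : ℝ) / 2 ^ ℓ i ≤ x i ∧ x i < ((jj i : ℝ) + 1) / 2 ^ ℓ i) := by
    rw [hLdef, mem_dyadicBox_iff]
    constructor
    · intro h
      refine ⟨?_, fun i hic => by simpa [Function.update_of_ne hic] using h i⟩
      have h1 := h c
      simp only [Function.update_self] at h1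
      push_cast at h1
      rw [hpow] at h1
      exact ⟨h1.1, h1.2⟩
    · rintro ⟨h1, h2⟩ i
      rcases eq_or_ne i c with rfl | hic
      · simp only [Function.update_self]
        push_cast
        rw [hpow]
        exact ⟨h1.1, h1.2⟩
      · simpa [Function.update_of_ne hic] using h2 i hic
  have hq' : (0:ℝ) < 2 ^ ℓ c * 2 := by positivity
  have hUR : x ∈ U → x ∈ dyadicBox d ℓ jj := by
    rw [hUmem, mem_dyadicBox_iff]
    rintro ⟨h1, h2⟩ i
    rcases eq_or_ne i c with rfl | hic
    · rw [div_le_iff₀ hq'] at h1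
      constructor
      · rw [div_le_iff₀ hp]; nlinarith [h1.1]
      · rw [lt_div_iff₀ hp]
        have := h1.2
        rw [lt_div_iff₀ hq'] at this
        nlinarith
    · exact h2 i hic
  have hLR : x ∈ L → x ∈ dyadicBox d ℓ jj := by
    rw [hLmem, mem_dyadicBox_iff]
    rintro ⟨h1, h2⟩ i
    rcases eq_or_ne i c with rfl | hic
    · constructor
      · rw [div_le_iff₀ hp]
        have := h1.1
        rw [div_le_iff₀ hq'] at this
        nlinarith
      · rw [lt_div_iff₀ hp]
        have := h1.2
        rw [lt_div_iff₀ hq'] at this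
        nlinarith
    · exact h2 i hic
  have hUL : ¬(x ∈ U ∧ x ∈ L) := by
    rw [hUmem, hLmem]
    rintro ⟨⟨h1, -⟩, ⟨h2, -⟩⟩
    rw [div_le_iff₀ hq'] at h1
    rw [lt_div_iff₀ hq'] at h2
    linarith [h1, h2.2]
  have hRUL : x ∈ dyadicBox d ℓ jj → x ∈ U ∨ x ∈ L := by
    intro h
    have hc := h c
    by_cases hmid : (2 * (jj c : ℝ) + 1) / (2 ^ ℓ c * 2) ≤ x c
    · left
      rw [hUmem]
      refine ⟨⟨hmid, ?_⟩, fun i hic => h i⟩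
      rw [lt_div_iff₀ hq']
      have := hc.2
      rw [lt_div_iff₀ hp] at this
      nlinarith
    · right
      rw [hLmem]
      refine ⟨⟨?_, not_le.1 hmid⟩, fun i hic => h i⟩
      rw [div_le_iff₀ hq']
      have := hc.1
      rw [div_le_iff₀ hp] at this
      nlinarith
  rw [chi_eq_ite, chi_eq_ite, chi_eq_ite, ← hUdef, ← hLdef]
  by_cases hU : x ∈ U
  · have hR := hUR hU
    have hL : x ∉ L := fun h => hUL ⟨hU, h⟩
    rw [if_pos hU, if_neg hL, if_pos hR]
    norm_num
  · by_cases hL : x ∈ L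
    · have hR := hLR hL
      rw [if_neg hU, if_pos hL, if_pos hR]
      norm_num
    · have hR : x ∉ dyadicBox d ℓ jj := fun h => (hRUL h).elim hU hL
      rw [if_neg hU, if_neg hL, if_neg hR]
      norm_num

lemma chi_mem01 {d : ℕ} (ℓ jj : Fin d → ℕ) (x : Fin d → ℝ) :
    chi d ℓ jj x = 0 ∨ chi d ℓ jj x = 1 := by
  classical
  rw [chi_eq_ite]
  by_cases h : x ∈ dyadicBox d ℓ jj <;> simp [h]

lemma Psi_sq (d k : ℕ) (r : Fin (k + 1) → Fin d) (ℓ jj : Fin d → ℕ) (x : Fin d → ℝ) :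
    Psi d k r ℓ jj x ^ 2 = (1/2 : ℝ) ^ k * chi d ℓ jj x := by
  rcases Nat.eq_zero_or_pos k with rfl | hk
  · rw [Psi, if_pos rfl]
    rcases chi_mem01 ℓ jj x with h | h <;> rw [h] <;> norm_num
  · rw [Psi, if_neg hk.ne', mul_pow, ← Finset.prod_pow]
    have hprod : ∀ t ∈ Finset.Ioi (0 : Fin (k+1)),
        (chi d (Function.update ℓ (r t) (ℓ (r t) + 1))
            (Function.update jj (r t) (2 * jj (r t) + 1)) x
          - chi d (Function.update ℓ (r t) (ℓ (r t) + 1))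
            (Function.update jj (r t) (2 * jj (r t))) x) ^ 2 = chi d ℓ jj x :=
      fun t _ => half_sq d ℓ jj x (r t)
    rw [Finset.prod_congr rfl hprod, Finset.prod_const]
    have hcard : (Finset.Ioi (0 : Fin (k+1))).card = k := by
      rw [Fin.card_Ioi]
      simp
    rw [hcard]
    have h2 : ((Real.sqrt 2)⁻¹ ^ k) ^ 2 = (1/2 : ℝ) ^ k := by
      have : ((Real.sqrt 2)⁻¹ : ℝ) ^ 2 = (1/2 : ℝ) := by
        rw [inv_pow, Real.sq_sqrt (by norm_num : (0:ℝ) ≤ 2)]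
        norm_num
      calc ((Real.sqrt 2)⁻¹ ^ k) ^ 2 = (((Real.sqrt 2)⁻¹) ^ 2) ^ k := by ring
        _ = (1/2 : ℝ) ^ k := by rw [this]
    rw [h2]
    rcases chi_mem01 ℓ jj x with h | h <;> rw [h] <;>
      simp [zero_pow hk.ne']

open Classical in
lemma sum_jj (d : ℕ) (ℓ : Fin d → ℕ) (x : Fin d → ℝ) (hx : ∀ i, 0 ≤ x i ∧ x i < 1)
    (M : ℕ) (hM : ∀ i, ℓ i ≤ M) :
    ∑ jj ∈ Fintype.piFinset (fun _ : Fin d => Finset.range (2 ^ M)),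
      (if (∀ i, jj i < 2 ^ ℓ i) then chi d ℓ jj x else 0) = 1 := by
  classical
  set jj₀ : Fin d → ℕ := fun i => ⌊x i * 2 ^ ℓ i⌋₊ with hjj₀
  have hpos : ∀ i, (0:ℝ) < 2 ^ ℓ i := fun i => by positivity
  have hsmall : ∀ i, jj₀ i < 2 ^ ℓ i := by
    intro i
    rw [hjj₀, Nat.floor_lt (mul_nonneg (hx i).1 (hpos i).le)]
    · push_cast
      nlinarith [(hx i).2, hpos i]
  have hmem₀ : jj₀ ∈ Fintype.piFinset (fun _ : Fin d => Finset.range (2 ^ M)) := by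
    rw [Fintype.mem_piFinset]
    intro i
    rw [Finset.mem_range]
    exact lt_of_lt_of_le (hsmall i) (Nat.pow_le_pow_right (by norm_num) (hM i))
  have hchi : ∀ jj : Fin d → ℕ,
      (if (∀ i, jj i < 2 ^ ℓ i) then chi d ℓ jj x else 0) = if jj = jj₀ then 1 else 0 := by
    intro jj
    by_cases h : jj = jj₀
    · subst h
      rw [if_pos hsmall, if_pos rfl, chi_eq_ite, if_pos]
      intro i
      constructor
      · rw [div_le_iff₀ (hpos i)]
        exact Nat.floor_le (mul_nonneg (hx i).1 (hpos i).le)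
      · rw [lt_div_iff₀ (hpos i)]
        exact Nat.lt_floor_add_one _
    · rw [if_neg h]
      by_cases hb : ∀ i, jj i < 2 ^ ℓ i
      · rw [if_pos hb, chi_eq_ite, if_neg]
        intro hmem
        apply h
        funext i
        have hi := hmem i
        have h0 : (0:ℝ) ≤ x i * 2 ^ ℓ i := mul_nonneg (hx i).1 (hpos i).le
        have : jj i = ⌊x i * 2 ^ ℓ i⌋₊ := by
          symm
          rw [Nat.floor_eq_iff h0]
          constructor
          · rw [div_le_iff₀ (hpos i)] at hi
            exact_mod_cast hi.1
          · rw [lt_div_iff₀ (hpos i)] at hi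
            exact_mod_cast hi.2
        exact this
      · rw [if_neg hb]
  rw [Finset.sum_congr rfl (fun jj _ => hchi jj)]
  rw [Finset.sum_ite_eq' _ jj₀ (fun _ => 1)]
  rw [if_pos hmem₀]

lemma card_piAntidiag_univ (q n : ℕ) :
    (piAntidiag (univ : Finset (Fin (q+1))) n).card = (n + q).choose q := by
  classical
  have h1 : ((univ : Finset (Fin (q+1))).sym n).card
      = (piAntidiag (univ : Finset (Fin (q+1))) n).card := by
    rw [← map_sym_eq_piAntidiag (univ : Finset (Fin (q+1))) n, Finset.card_map]
  have h2 : (univ : Finset (Fin (q+1))).sym n = (univ : Finset (Sym (Fin (q+1)) n)) := by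
    ext s
    simp [Finset.mem_sym_iff]
  rw [← h1, h2, Finset.card_univ, Sym.card_sym_eq_choose]
  rw [Fintype.card_fin]
  have : q + 1 + n - 1 = n + q := by omega
  rw [this]
  rw [← Nat.choose_symm (by omega : n ≤ n + q)]
  congr 1
  omega

open Classical in
lemma card_L (d k : ℕ) (r : Fin (k+1) → Fin d) (hr : Function.Injective r) (n : ℕ) :
    ((piAntidiag (univ : Finset (Fin d)) n).filter
      (fun ℓ => ∀ i, i ∉ Set.range r → ℓ i = 0)).card = (n + k).choose k := by
  classical
  rw [← card_piAntidiag_univ k n]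
  refine Finset.card_bij' (fun ℓ _ => ℓ ∘ r)
    (fun g _ => fun i => ∑ t ∈ univ.filter (fun t => r t = i), g t) ?_ ?_ ?_ ?_
  · -- hi : image in target
    intro ℓ hℓ
    simp only [Finset.mem_filter, Finset.mem_piAntidiag] at hℓ
    obtain ⟨⟨hsum, -⟩, hsupp⟩ := hℓ
    simp only [Finset.mem_piAntidiag]
    refine ⟨?_, fun t _ => Finset.mem_univ t⟩
    rw [← hsum]
    have h1 : ∑ i ∈ Finset.image r univ, ℓ i = ∑ t, ℓ (r t) :=
      Finset.sum_image (fun a _ b _ h => hr h)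
    have h2 : ∑ i, ℓ i = ∑ i ∈ Finset.image r univ, ℓ i := by
      symm
      apply Finset.sum_subset (Finset.subset_univ _)
      intro i _ hi
      apply hsupp
      intro ⟨t, ht⟩
      exact hi (Finset.mem_image.2 ⟨t, Finset.mem_univ t, ht⟩)
    rw [show univ.sum ℓ = ∑ i, ℓ i from rfl, h2, h1]
    rfl
  · -- hj
    intro g hg
    simp only [Finset.mem_piAntidiag] at hg
    obtain ⟨hsum, -⟩ := hg
    simp only [Finset.mem_filter, Finset.mem_piAntidiag]
    refine ⟨⟨?_, fun i _ => Finset.mem_univ i⟩, ?_⟩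
    · rw [← hsum]
      rw [Finset.sum_fiberwise_of_maps_to (fun t _ => Finset.mem_univ (r t)) g]
    · intro i hi
      apply Finset.sum_eq_zero
      intro t ht
      exact absurd ⟨t, (Finset.mem_filter.1 ht).2⟩ hi
  · -- left_inv
    intro ℓ hℓ
    simp only [Finset.mem_filter] at hℓ
    funext i
    by_cases hi : i ∈ Set.range r
    · obtain ⟨t, rfl⟩ := hi
      have : univ.filter (fun t' => r t' = r t) = {t} := by
        ext t'
        simp only [Finset.mem_filter, Finset.mem_univ, true_and, Finset.mem_singleton]
        exact ⟨fun h => hr h, fun h => by rw [h]⟩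
      simp [this]
    · rw [hℓ.2 i hi]
      apply Finset.sum_eq_zero
      intro t ht
      exact absurd ⟨t, (Finset.mem_filter.1 ht).2⟩ hi
  · -- right_inv
    intro g _
    funext t
    have : univ.filter (fun t' => r t' = r t) = {t} := by
      ext t'
      simp only [Finset.mem_filter, Finset.mem_univ, true_and, Finset.mem_singleton]
      exact ⟨fun h => hr h, fun h => by rw [h]⟩
    simp [Function.comp, this]

open Classical in
lemma card_R (d k : ℕ) (hd : 0 < d) :
    ((univ : Finset (Fin (k+1) → Fin d)).filter
      (fun r : Fin (k+1) → Fin d => StrictMono r ∧ (r 0 : ℕ) = 0)).card = (d - 1).choose k := by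
  classical
  set z : Fin d := ⟨0, hd⟩ with hz
  have hIoi : (Finset.Ioi z).card = d - 1 := by
    rw [Fin.card_Ioi]
    simp [hz]
  rw [← hIoi, ← Finset.card_powersetCard]
  refine Finset.card_bij'
    (fun r _ => Finset.image (fun t : Fin k => r t.succ) univ)
    (fun s hs => Fin.cases z
      (fun t => Finset.orderEmbOfFin s (Finset.mem_powersetCard.1 hs).2 t)) ?_ ?_ ?_ ?_
  · intro r hr
    simp only [Finset.mem_filter] at hr
    obtain ⟨-, hsm, hr0⟩ := hr
    have hr0' : r 0 = z := Fin.ext (by simpa using hr0)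
    rw [Finset.mem_powersetCard]
    constructor
    · intro a ha
      rw [Finset.mem_image] at ha
      obtain ⟨t, -, rfl⟩ := ha
      rw [Finset.mem_Ioi, ← hr0']
      exact hsm (Fin.succ_pos t)
    · rw [Finset.card_image_of_injective _ (fun a b hab => Fin.succ_injective _ (hsm.injective hab)),
        Finset.card_univ, Fintype.card_fin]
  · intro s hs
    simp only [Finset.mem_filter]
    obtain ⟨hsub, hcard⟩ := Finset.mem_powersetCard.1 hs
    refine ⟨Finset.mem_univ _, ?_, ?_⟩
    · intro a b hab
      induction b using Fin.cases with
      | zero => exact absurd hab (Fin.not_lt_zero a)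
      | succ u =>
        induction a using Fin.cases with
        | zero =>
          simp only [Fin.cases_zero, Fin.cases_succ]
          have : Finset.orderEmbOfFin s hcard u ∈ Finset.Ioi z :=
            hsub (Finset.orderEmbOfFin_mem s hcard u)
          exact Finset.mem_Ioi.1 this
        | succ t =>
          simp only [Fin.cases_succ]
          exact (Finset.orderEmbOfFin s hcard).strictMono
            (Fin.succ_lt_succ_iff.1 hab)
    · simp [hz]
  · intro r hr
    simp only [Finset.mem_filter] at hr
    obtain ⟨-, hsm, hr0⟩ := hr
    have hr0' : r 0 = z := Fin.ext (by simpa using hr0)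
    have hinj : Function.Injective (fun t : Fin k => r t.succ) :=
      fun a b hab => Fin.succ_injective _ (hsm.injective hab)
    have hmem : ∀ t : Fin k, r t.succ ∈ Finset.image (fun t : Fin k => r t.succ) univ :=
      fun t => Finset.mem_image.2 ⟨t, Finset.mem_univ t, rfl⟩
    have hmono : StrictMono (fun t : Fin k => r t.succ) :=
      fun a b hab => hsm (Fin.succ_lt_succ_iff.2 hab)
    have hcard : (Finset.image (fun t : Fin k => r t.succ) univ).card = k := by
      rw [Finset.card_image_of_injective _ hinj, Finset.card_univ, Fintype.card_fin]
    have huniq := Finset.orderEmbOfFin_unique hcard hmem hmono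
    funext a
    induction a using Fin.cases with
    | zero => simpa using hr0'.symm
    | succ t =>
      simp only [Fin.cases_succ]
      exact (congr_fun huniq t).symm
  · intro s hs
    obtain ⟨hsub, hcard⟩ := Finset.mem_powersetCard.1 hs
    simp only [Fin.cases_succ]
    ext a
    simp only [Finset.mem_image, Finset.mem_univ, true_and]
    constructor
    · rintro ⟨t, rfl⟩
      exact Finset.orderEmbOfFin_mem s _ t
    · intro ha
      have : a ∈ Set.range (Finset.orderEmbOfFin s (Finset.mem_powersetCard.1 hs).2) := by
        rw [Finset.range_orderEmbOfFin]
        exact ha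
      obtain ⟨t, ht⟩ := this
      exact ⟨t, ht⟩

/-- For every `x ∈ [0,1)^d`, the squared Euclidean norm of the embedding vector `Ψ(x)`
equals `∑_{k=0}^{d-1} 2^{-k} C(m,k) C(d-1,k)`; in particular it is independent of `x`. -/
theorem stmt14 (d m : ℕ) (hd : 1 ≤ d) (hm : d - 1 ≤ m)
    (x : Fin d → ℝ) (hx : ∀ i, 0 ≤ x i ∧ x i < 1) :
    ∑ᶠ t : Triples d m, (Psi d t.val.1 t.val.2.1 t.val.2.2.1 t.val.2.2.2 x) ^ 2
      = ∑ k ∈ Finset.range d, (1/2 : ℝ) ^ k * (m.choose k) * ((d - 1).choose k) := by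
  classical
  set T : Finset ((k : ℕ) × (Fin (k + 1) → Fin d) × (Fin d → ℕ) × (Fin d → ℕ)) :=
    (Finset.range d).sigma (fun k =>
      ((univ : Finset (Fin (k+1) → Fin d)) ×ˢ
          (piAntidiag (univ : Finset (Fin d)) (m - k)) ×ˢ
          (Fintype.piFinset fun _ : Fin d => Finset.range (2 ^ m))).filter
        (fun p => StrictMono p.1 ∧ (p.1 0 : ℕ) = 0 ∧
          (∀ i, i ∉ Set.range p.1 → p.2.1 i = 0) ∧
          (∀ i, p.2.2 i < 2 ^ p.2.1 i))) with hT
  have hTT : (T : Set ((k : ℕ) × (Fin (k + 1) → Fin d) × (Fin d → ℕ) × (Fin d → ℕ)))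
      = Triples d m := by
    ext t
    obtain ⟨k, r, ℓ, jj⟩ := t
    rw [Finset.mem_coe, hT]
    simp only [Finset.mem_sigma, Finset.mem_filter, Finset.mem_product,
      Fintype.mem_piFinset, Finset.mem_range, Finset.mem_piAntidiag, Finset.mem_univ,
      true_and, Triples, Set.mem_setOf_eq]
    constructor
    · rintro ⟨hk, ⟨⟨hℓsum, -⟩, hjj⟩, hsm, hr0, hsupp, hb⟩
      exact ⟨hk, by omega, hsm, hr0, hℓsum, hb, hsupp⟩
    · rintro ⟨hkd, hkm, hsm, hr0, hsum, hb, hsupp⟩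
      have hle : ∀ i, ℓ i ≤ m := by
        intro i
        have := Finset.single_le_sum (f := ℓ) (fun j _ => Nat.zero_le _) (Finset.mem_univ i)
        omega
      refine ⟨hkd, ⟨⟨⟨hsum, fun i _ => trivial⟩, ?_⟩, hsm, hr0, hsupp, hb⟩⟩
      intro i
      exact lt_of_lt_of_le (hb i) (Nat.pow_le_pow_right (by norm_num) (hle i))
  have step1 : (∑ᶠ t : Triples d m, (Psi d t.val.1 t.val.2.1 t.val.2.2.1 t.val.2.2.2 x) ^ 2)
      = ∑ t ∈ T, Psi d t.1 t.2.1 t.2.2.1 t.2.2.2 x ^ 2 := by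
    have e2 := finsum_set_coe_eq_finsum_mem
      (f := fun t : (k : ℕ) × (Fin (k + 1) → Fin d) × (Fin d → ℕ) × (Fin d → ℕ) =>
        Psi d t.1 t.2.1 t.2.2.1 t.2.2.2 x ^ 2) (Triples d m)
    have e1 := finsum_mem_coe_finset
      (f := fun t : (k : ℕ) × (Fin (k + 1) → Fin d) × (Fin d → ℕ) × (Fin d → ℕ) =>
        Psi d t.1 t.2.1 t.2.2.1 t.2.2.2 x ^ 2) (s := T)
    rw [e2, ← hTT, e1]
  rw [step1, hT, Finset.sum_sigma]
  refine Finset.sum_congr rfl fun k hk => ?_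
  rw [Finset.mem_range] at hk
  have hkm : k ≤ m := by omega
  rw [Finset.sum_filter, Finset.sum_product]
  have hinner : ∀ r : Fin (k+1) → Fin d,
      (∑ q ∈ (piAntidiag (univ : Finset (Fin d)) (m - k)) ×ˢ
          (Fintype.piFinset fun _ : Fin d => Finset.range (2 ^ m)),
        if (StrictMono r ∧ (r 0 : ℕ) = 0 ∧ (∀ i, i ∉ Set.range r → q.1 i = 0) ∧
            (∀ i, q.2 i < 2 ^ q.1 i))
        then Psi d k r q.1 q.2 x ^ 2 else 0)
      = if (StrictMono r ∧ (r 0 : ℕ) = 0) then ((1/2 : ℝ)) ^ k * m.choose k else 0 := by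
    intro r
    rw [Finset.sum_product]
    by_cases hr : StrictMono r ∧ (r 0 : ℕ) = 0
    · rw [if_pos hr]
      have hsummand : ∀ ℓ' ∈ piAntidiag (univ : Finset (Fin d)) (m - k),
          (∑ jj' ∈ Fintype.piFinset fun _ : Fin d => Finset.range (2 ^ m),
            if (StrictMono r ∧ (r 0 : ℕ) = 0 ∧ (∀ i, i ∉ Set.range r → ℓ' i = 0) ∧
                (∀ i, jj' i < 2 ^ ℓ' i))
            then Psi d k r ℓ' jj' x ^ 2 else 0)
          = if (∀ i, i ∉ Set.range r → ℓ' i = 0) then ((1/2 : ℝ))^k else 0 := by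
        intro ℓ' hℓ'
        simp only [Finset.mem_piAntidiag] at hℓ'
        have hle : ∀ i, ℓ' i ≤ m := by
          intro i
          have h1 := Finset.single_le_sum (f := ℓ') (fun j _ => Nat.zero_le _)
            (Finset.mem_univ i)
          have h2 : ∑ j, ℓ' j = m - k := hℓ'.1
          omega
        by_cases hsupp : ∀ i, i ∉ Set.range r → ℓ' i = 0
        · rw [if_pos hsupp]
          have heq : ∀ jj' : Fin d → ℕ,
              (if (StrictMono r ∧ (r 0 : ℕ) = 0 ∧ (∀ i, i ∉ Set.range r → ℓ' i = 0) ∧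
                  (∀ i, jj' i < 2 ^ ℓ' i))
                then Psi d k r ℓ' jj' x ^ 2 else 0)
              = (1/2:ℝ)^k * (if (∀ i, jj' i < 2 ^ ℓ' i) then chi d ℓ' jj' x else 0) := by
            intro jj'
            by_cases hb : ∀ i, jj' i < 2 ^ ℓ' i
            · rw [if_pos ⟨hr.1, hr.2, hsupp, hb⟩, if_pos hb, Psi_sq]
            · rw [if_neg (fun h => hb h.2.2.2), if_neg hb, mul_zero]
          rw [Finset.sum_congr rfl (fun jj' _ => heq jj'), ← Finset.mul_sum,
            sum_jj d ℓ' x hx m hle, mul_one]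
        · rw [if_neg hsupp]
          apply Finset.sum_eq_zero
          intro jj' _
          rw [if_neg (fun h => hsupp h.2.2.1)]
      rw [Finset.sum_congr rfl hsummand, ← Finset.sum_filter, Finset.sum_const,
        card_L d k r hr.1.injective (m - k)]
      have hmk : m - k + k = m := by omega
      rw [hmk, nsmul_eq_mul]
      ring
    · rw [if_neg hr]
      apply Finset.sum_eq_zero; intro ℓ' _
      apply Finset.sum_eq_zero; intro jj' _
      exact if_neg (fun h => hr ⟨h.1, h.2.1⟩)
  rw [Finset.sum_congr rfl (fun r _ => hinner r), ← Finset.sum_filter, Finset.sum_const,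
    card_R d k hd, nsmul_eq_mul]
  ring
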